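/- arXiv:2605.04703 — 4 statements merged into one kernel-verified Lean document; each statement's English description precedes it below -/
import Mathlib

section
/- Small connection-range limit of the entropy integral: let K ⊆ ℝ^d be compact with Lebesgue measure 1, nonempty interior, and Lebesgue-null topological boundary, and let p : [0,∞) → [0,1] be measurable with ∫_{ℝ^d} h₂(p(‖v‖)) dv < ∞. Then lim_{r₀ → 0⁺} (1/r₀^d) ∬_{K×K} h₂(p(‖x−y‖/r₀)) dx dy = ∫_{ℝ^d} h₂(p(‖v‖)) dv. -/
open MeasureTheory Real Filter
open scoped ENNReal

/-- Binary entropy function (natural log, `0 log 0 = 0`). -/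
noncomputable def h2 (t : ℝ) : ℝ := -(t * Real.log t) - (1 - t) * Real.log (1 - t)

lemma h2_measurable : Measurable h2 :=
  ((measurable_id.mul Real.measurable_log).neg).sub
    ((measurable_const.sub measurable_id).mul
      (Real.measurable_log.comp (measurable_const.sub measurable_id)))

/-- Continuity of the volume of `K ∩ (K - w)` at `w = 0`. -/
lemma vol_inter_tendsto (d : ℕ) (K : Set (EuclideanSpace ℝ (Fin d)))
    (hK : IsCompact K) (hvol : volume K = 1) :
    Tendsto (fun w : EuclideanSpace ℝ (Fin d) =>
        (volume (K ∩ ((· + w) ⁻¹' K))).toReal) (nhds 0) (nhds 1) := by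
  rw [Metric.tendsto_nhds]
  intro ε hε
  have hhalf : (0:ℝ) < ε / 2 := by linarith
  have hlt : volume K < 1 + ENNReal.ofReal (ε/2) := by
    rw [hvol]
    exact ENNReal.lt_add_right ENNReal.one_ne_top (ENNReal.ofReal_pos.2 hhalf).ne'
  obtain ⟨U, hKU, hUopen, hU⟩ := K.exists_isOpen_lt_of_lt (1 + ENNReal.ofReal (ε/2)) hlt
  obtain ⟨δ, hδpos, hδ⟩ := hK.exists_thickening_subset_open hUopen hKU
  have hmK : MeasurableSet K := hK.isClosed.measurableSet
  filter_upwards [Metric.ball_mem_nhds (0 : EuclideanSpace ℝ (Fin d)) hδpos] with w hw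
  set Kw : Set (EuclideanSpace ℝ (Fin d)) := (· + w) ⁻¹' K with hKw_def
  have hKw_vol : volume Kw = 1 := by
    rw [hKw_def, measure_preimage_add_right volume w K, hvol]
  have hKwU : Kw ⊆ U := by
    intro x hx
    refine hδ (Metric.mem_thickening_iff.2 ⟨x + w, hx, ?_⟩)
    have : dist x (x + w) = ‖w‖ := by
      rw [dist_eq_norm]; simp
    rw [this]
    exact mem_ball_zero_iff.1 hw
  have hdiffU : volume (U \ K) ≤ ENNReal.ofReal (ε/2) := by
    have hd : volume (U \ K) = volume U - volume K :=
      measure_diff hKU hmK.nullMeasurableSet (by rw [hvol]; exact ENNReal.one_ne_top)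
    rw [hd, hvol]
    exact tsub_le_iff_right.2 (by rw [add_comm]; exact hU.le)
  have h1 : volume (Kw \ K) ≤ ENNReal.ofReal (ε/2) :=
    le_trans (measure_mono (Set.diff_subset_diff_left hKwU)) hdiffU
  have h2' : (1:ℝ≥0∞) ≤ volume (K ∩ Kw) + ENNReal.ofReal (ε/2) := by
    calc (1:ℝ≥0∞) = volume Kw := hKw_vol.symm
      _ ≤ volume ((K ∩ Kw) ∪ (Kw \ K)) := by
          refine measure_mono fun x hx => ?_
          by_cases hxK : x ∈ K
          · exact Or.inl ⟨hxK, hx⟩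
          · exact Or.inr ⟨hx, hxK⟩
      _ ≤ volume (K ∩ Kw) + volume (Kw \ K) := measure_union_le _ _
      _ ≤ volume (K ∩ Kw) + ENNReal.ofReal (ε/2) := add_le_add le_rfl h1
  have h3 : volume (K ∩ Kw) ≤ 1 := hvol ▸ measure_mono Set.inter_subset_left
  have hfin : volume (K ∩ Kw) ≠ ⊤ := (lt_of_le_of_lt h3 ENNReal.one_lt_top).ne
  set a := (volume (K ∩ Kw)).toReal with ha_def
  have ha1 : a ≤ 1 := by
    have := ENNReal.toReal_mono ENNReal.one_ne_top h3
    rwa [ENNReal.toReal_one] at this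
  have ha2 : 1 ≤ a + ε/2 := by
    have hne : volume (K ∩ Kw) + ENNReal.ofReal (ε/2) ≠ ⊤ :=
      ENNReal.add_ne_top.2 ⟨hfin, ENNReal.ofReal_ne_top⟩
    have := ENNReal.toReal_mono hne h2'
    rwa [ENNReal.toReal_one, ENNReal.toReal_add hfin ENNReal.ofReal_ne_top,
      ENNReal.toReal_ofReal hhalf.le] at this
  rw [Real.dist_eq, abs_sub_lt_iff]
  constructor <;> linarith

/-- **Small connection-range limit of the entropy integral.**
`lim_{r₀→0⁺} (1/r₀^d) ∬_{K×K} h₂(p(‖x−y‖/r₀)) dx dy = ∫_{ℝ^d} h₂(p(‖v‖)) dv`. -/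
theorem small_range_entropy_integral_limit
    (d : ℕ)
    (K : Set (EuclideanSpace ℝ (Fin d)))
    (hK_compact : IsCompact K) (hK_vol : volume K = 1)
    (hK_int : (interior K).Nonempty) (hK_bd : volume (frontier K) = 0)
    (p : ℝ → ℝ) (hp_meas : Measurable p)
    (hp_range : ∀ r : ℝ, 0 ≤ r → p r ∈ Set.Icc (0 : ℝ) 1)
    (hstar_int : Integrable (fun v : EuclideanSpace ℝ (Fin d) => h2 (p ‖v‖))) :
    Tendsto
      (fun r₀ : ℝ => (1 / r₀ ^ d) * ∫ x in K, ∫ y in K, h2 (p (dist x y / r₀)))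
      (nhdsWithin 0 (Set.Ioi 0))
      (nhds (∫ v : EuclideanSpace ℝ (Fin d), h2 (p ‖v‖))) := by
  let E := EuclideanSpace ℝ (Fin d)
  set F : E → ℝ := fun v => h2 (p ‖v‖) with hF_def
  have hmK : MeasurableSet K := hK_compact.isClosed.measurableSet
  have hF_meas : Measurable F := h2_measurable.comp (hp_meas.comp measurable_norm)
  -- the indicator of K
  set I : E → ℝ := K.indicator (fun _ => (1:ℝ)) with hI_def
  have hI_meas : Measurable I := measurable_const.indicator hmK
  have hI0 : ∀ x, 0 ≤ I x := fun x => by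
    by_cases hx : x ∈ K <;> simp [hI_def, Set.indicator_apply, hx]
  have hI1 : ∀ x, I x ≤ 1 := fun x => by
    by_cases hx : x ∈ K <;> simp [hI_def, Set.indicator_apply, hx]
  have hI_int : Integrable I := by
    rw [hI_def, integrable_indicator_iff hmK]
    exact integrableOn_const (by rw [hK_vol]; exact ENNReal.one_ne_top)
  -- the two-variable function
  set G : ℝ → E → E → ℝ := fun r₀ x v => I x * I (x + r₀ • v) * F v with hG_def
  have hG_meas : ∀ r₀, Measurable (Function.uncurry (G r₀)) := by
    intro r₀
    exact ((hI_meas.comp measurable_fst).mul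
      (hI_meas.comp (measurable_fst.add (measurable_snd.const_smul r₀)))).mul
      (hF_meas.comp measurable_snd)
  have hG_int : ∀ r₀, Integrable (Function.uncurry (G r₀)) (volume.prod volume) := by
    intro r₀
    refine (hI_int.mul_prod hstar_int.abs).mono' (hG_meas r₀).aestronglyMeasurable
      (Filter.Eventually.of_forall fun z => ?_)
    have h1 : ‖Function.uncurry (G r₀) z‖ = I z.1 * I (z.1 + r₀ • z.2) * |F z.2| := by
      rw [Real.norm_eq_abs, Function.uncurry]
      simp only [hG_def, abs_mul, abs_of_nonneg (hI0 _)]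
    rw [h1]
    exact mul_le_mul_of_nonneg_right
      (mul_le_of_le_one_right (hI0 z.1) (hI1 _)) (abs_nonneg _)
  -- first identity: integrating in x
  have eq1 : ∀ r₀ : ℝ, ∀ v : E,
      (∫ x, G r₀ x v) = F v * (volume (K ∩ ((· + r₀ • v) ⁻¹' K))).toReal := by
    intro r₀ v
    have hset : MeasurableSet (K ∩ ((· + r₀ • v) ⁻¹' K)) :=
      hmK.inter ((measurable_add_const (r₀ • v)) hmK)
    have hfun : (fun x => G r₀ x v)
        = (K ∩ ((· + r₀ • v) ⁻¹' K)).indicator (fun _ => F v) := by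
      funext x
      by_cases hx : x ∈ K <;> by_cases hx' : x + r₀ • v ∈ K <;>
        simp [hG_def, hI_def, Set.indicator_apply, hx, hx', Set.mem_preimage]
    rw [hfun, integral_indicator_const (F v) hset, smul_eq_mul, mul_comm]; rfl
  -- the centering function
  set φ : ℝ → E → ℝ := fun r₀ v => F v * (volume (K ∩ ((· + r₀ • v) ⁻¹' K))).toReal
    with hφ_def
  have hφ_eq : ∀ r₀, (fun v => ∫ x, G r₀ x v) = φ r₀ := fun r₀ => funext (eq1 r₀)
  -- second identity: integrating in v for r₀ > 0
  have eq2 : ∀ r₀ : ℝ, 0 < r₀ →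
      (∫ v, φ r₀ v) = (1 / r₀ ^ d) * ∫ x in K, ∫ y in K, h2 (p (dist x y / r₀)) := by
    intro r₀ hr
    have key : ∀ x : E, (∫ v, G r₀ x v)
        = I x * ((r₀ ^ d)⁻¹ * ∫ y in K, h2 (p (dist x y / r₀))) := by
      intro x
      set H : E → ℝ := fun y => I y * h2 (p (dist x y / r₀)) with hH_def
      have hGH : (fun v => G r₀ x v) = fun v => I x * H (x + r₀ • v) := by
        funext v
        have hd : dist x (x + r₀ • v) / r₀ = ‖v‖ := by
          rw [dist_eq_norm]
          have : x - (x + r₀ • v) = -(r₀ • v) := by abel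
          rw [this, norm_neg, norm_smul, Real.norm_eq_abs, abs_of_pos hr]
          field_simp
        simp only [hH_def, hG_def, hd, hF_def]
        ring
      rw [hGH, integral_const_mul]
      have hsmul : (∫ v, H (x + r₀ • v))
          = (r₀ ^ d)⁻¹ • ∫ w, H (x + w) := by
        have := Measure.integral_comp_smul_of_nonneg (volume : Measure E)
          (fun w => H (x + w)) r₀ (hR := hr.le)
        rwa [finrank_euclideanSpace_fin] at this
      rw [hsmul, integral_add_left_eq_self H x, smul_eq_mul]
      congr 2
      rw [← integral_indicator hmK]
      congr 1
      funext y
      by_cases hy : y ∈ K <;> simp [hH_def, hI_def, Set.indicator_apply, hy]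
    calc (∫ v, φ r₀ v) = ∫ v, ∫ x, G r₀ x v := by rw [hφ_eq r₀]
      _ = ∫ x, ∫ v, G r₀ x v := (integral_integral_swap (hG_int r₀)).symm
      _ = ∫ x, I x * ((r₀ ^ d)⁻¹ * ∫ y in K, h2 (p (dist x y / r₀))) := by
          congr 1; funext x; exact key x
      _ = ∫ x, K.indicator (fun x => (r₀ ^ d)⁻¹ * ∫ y in K, h2 (p (dist x y / r₀))) x := by
          congr 1; funext x
          by_cases hx : x ∈ K <;> simp [hI_def, Set.indicator_apply, hx]
      _ = ∫ x in K, (r₀ ^ d)⁻¹ * ∫ y in K, h2 (p (dist x y / r₀)) := integral_indicator hmK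
      _ = (1 / r₀ ^ d) * ∫ x in K, ∫ y in K, h2 (p (dist x y / r₀)) := by
          rw [integral_const_mul, one_div]
  -- dominated convergence
  have hmain : Tendsto (fun r₀ : ℝ => ∫ v, φ r₀ v) (nhdsWithin 0 (Set.Ioi 0))
      (nhds (∫ v : E, F v)) := by
    refine tendsto_integral_filter_of_dominated_convergence (fun v => |F v|)
      (Filter.Eventually.of_forall fun r₀ => ?_)
      (Filter.Eventually.of_forall fun r₀ => Filter.Eventually.of_forall fun v => ?_)
      hstar_int.abs
      (Filter.Eventually.of_forall fun v => ?_)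
    · rw [← hφ_eq r₀]
      exact ((hG_int r₀).swap.integral_prod_left).aestronglyMeasurable
    · -- bound
      have hle : volume (K ∩ ((· + r₀ • v) ⁻¹' K)) ≤ 1 :=
        hK_vol ▸ measure_mono Set.inter_subset_left
      have ht1 : (volume (K ∩ ((· + r₀ • v) ⁻¹' K))).toReal ≤ 1 := by
        have := ENNReal.toReal_mono ENNReal.one_ne_top hle
        rwa [ENNReal.toReal_one] at this
      have ht0 : 0 ≤ (volume (K ∩ ((· + r₀ • v) ⁻¹' K))).toReal := ENNReal.toReal_nonneg
      rw [hφ_def, Real.norm_eq_abs, abs_mul, abs_of_nonneg ht0]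
      nlinarith [abs_nonneg (F v)]
    · -- pointwise convergence
      have hv : Tendsto (fun r₀ : ℝ => r₀ • v) (nhdsWithin 0 (Set.Ioi 0)) (nhds 0) := by
        have hc : Tendsto (fun r₀ : ℝ => r₀ • v) (nhds 0) (nhds 0) := by
          have := (continuous_id.smul (continuous_const (y := v))).tendsto (0:ℝ)
          simp only [Pi.smul_apply', id_eq, zero_smul] at this; exact this
        exact hc.mono_left nhdsWithin_le_nhds
      have := (vol_inter_tendsto d K hK_compact hK_vol).comp hv
      have h1 : Tendsto (fun r₀ : ℝ => F v * (volume (K ∩ ((· + r₀ • v) ⁻¹' K))).toReal)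
          (nhdsWithin 0 (Set.Ioi 0)) (nhds (F v * 1)) := tendsto_const_nhds.mul this
      rw [mul_one] at h1
      exact h1
  refine hmain.congr' ?_
  filter_upwards [self_mem_nhdsWithin] with r₀ hr
  exact eq2 r₀ hr
end

section
/- For all x, y ∈ [0,1], |h₂(x) − h₂(y)| ≤ h₂(|x − y|). -/
lemma h2_eq (t : ℝ) : h2 t = Real.binEntropy t := by
  simp [h2, Real.binEntropy_eq_negMulLog_add_negMulLog_one_sub, Real.negMulLog]
  ring

lemma binEntropy_subadd {a b : ℝ} (ha : 0 ≤ a) (hb : 0 ≤ b) (hab : a + b ≤ 1) :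
    Real.binEntropy (a + b) ≤ Real.binEntropy a + Real.binEntropy b := by
  rcases eq_or_lt_of_le (add_nonneg ha hb) with h | h
  · have ha0 : a = 0 := by linarith [ha, hb]
    have hb0 : b = 0 := by linarith
    simp [ha0, hb0]
  · set s := a + b with hs
    have hconc := Real.strictConcave_binEntropy.concaveOn
    have hsmem : s ∈ Set.Icc (0:ℝ) 1 := ⟨h.le, hab⟩
    have h0mem : (0:ℝ) ∈ Set.Icc (0:ℝ) 1 := by norm_num
    have h1 : a / s * Real.binEntropy s + b / s * Real.binEntropy 0 ≤
        Real.binEntropy (a / s * s + b / s * 0) :=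
      hconc.2 hsmem h0mem (div_nonneg ha h.le) (div_nonneg hb h.le)
        (by field_simp <;> linarith)
    have h2' : b / s * Real.binEntropy s + a / s * Real.binEntropy 0 ≤
        Real.binEntropy (b / s * s + a / s * 0) :=
      hconc.2 hsmem h0mem (div_nonneg hb h.le) (div_nonneg ha h.le)
        (by field_simp <;> linarith)
    rw [div_mul_cancel₀ _ h.ne'] at h1 h2'
    simp only [Real.binEntropy_zero, mul_zero, add_zero] at h1 h2'
    have : (a / s + b / s) * Real.binEntropy s ≤ Real.binEntropy a + Real.binEntropy b := by
      rw [add_mul]; exact add_le_add h1 h2'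
    rwa [← add_div, ← hs, div_self h.ne', one_mul] at this

lemma key {x y : ℝ} (hy0 : 0 ≤ y) (hyx : y ≤ x) (hx1 : x ≤ 1) :
    h2 x - h2 y ≤ h2 (x - y) ∧ h2 y - h2 x ≤ h2 (x - y) := by
  simp only [h2_eq]
  have hd0 : 0 ≤ x - y := sub_nonneg.2 hyx
  constructor
  · have := binEntropy_subadd hy0 hd0 (by linarith)
    rw [add_sub_cancel] at this
    linarith
  · have := binEntropy_subadd (a := 1 - x) (by linarith) hd0 (by linarith)
    have he : 1 - x + (x - y) = 1 - y := by ring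
    rw [he, Real.binEntropy_one_sub, Real.binEntropy_one_sub] at this
    linarith

/-- For all `x, y ∈ [0,1]`, `|h₂(x) − h₂(y)| ≤ h₂(|x − y|)`. -/
theorem abs_h2_sub_h2_le
    (x y : ℝ) (hx : x ∈ Set.Icc (0 : ℝ) 1) (hy : y ∈ Set.Icc (0 : ℝ) 1) :
    |h2 x - h2 y| ≤ h2 |x - y| := by
  rcases le_total y x with h | h
  · rw [abs_sub_comm, abs_of_nonneg (sub_nonneg.2 h)] at *
    obtain ⟨h1, h2'⟩ := key hy.1 h hx.2
    rw [abs_sub_le_iff]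
    exact ⟨by linarith, by linarith⟩
  · rw [abs_sub_comm x y, abs_of_nonneg (sub_nonneg.2 h)]
    obtain ⟨h1, h2'⟩ := key hx.1 h hy.2
    rw [abs_sub_le_iff]
    exact ⟨by linarith, by linarith⟩
end

section
/- Absolute log-likelihood-ratio bound: let P and Q be probability mass functions on a finite type with Q(x) > 0 whenever P(x) > 0. Then Σ_x P(x)·|log(P(x)/Q(x))| ≤ Σ_x P(x)·log(P(x)/Q(x)) + 2/e, where the sums range over x with P(x) > 0. -/
/-- **Absolute log-likelihood-ratio bound.** For pmfs `P, Q` on a finite type with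
`Q` positive wherever `P` is, `Σ_x P(x)|log(P(x)/Q(x))| ≤ Σ_x P(x) log(P(x)/Q(x)) + 2/e`,
the sums ranging over `x` with `P(x) > 0`. -/
theorem abs_log_likelihood_ratio_bound
    {α : Type*} [Fintype α]
    (P Q : α → ℝ)
    (hP_nonneg : ∀ x, 0 ≤ P x) (hP_sum : ∑ x, P x = 1)
    (hQ_nonneg : ∀ x, 0 ≤ Q x) (hQ_sum : ∑ x, Q x = 1)
    (hPQ : ∀ x, 0 < P x → 0 < Q x) :
    ∑ x ∈ Finset.univ.filter (fun x => 0 < P x), P x * |Real.log (P x / Q x)|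
      ≤ (∑ x ∈ Finset.univ.filter (fun x => 0 < P x), P x * Real.log (P x / Q x))
        + 2 / Real.exp 1 := by
  have he : (0:ℝ) < Real.exp 1 := Real.exp_pos 1
  have key : ∀ x ∈ Finset.univ.filter (fun x => 0 < P x),
      P x * |Real.log (P x / Q x)|
        ≤ P x * Real.log (P x / Q x) + 2 * (Q x / Real.exp 1) := by
    intro x hx
    have hPx : 0 < P x := (Finset.mem_filter.mp hx).2
    have hQx : 0 < Q x := hPQ x hPx
    have hneg : Real.log (Q x / P x) = - Real.log (P x / Q x) := by
      rw [Real.log_div hQx.ne' hPx.ne', Real.log_div hPx.ne' hQx.ne']; ring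
    have h3 : P x * Real.log (Q x / P x) ≤ Q x / Real.exp 1 := by
      have h1 : Real.log (Q x / P x / Real.exp 1) ≤ Q x / P x / Real.exp 1 - 1 :=
        Real.log_le_sub_one_of_pos (by positivity)
      have h2 : Real.log (Q x / P x / Real.exp 1) = Real.log (Q x / P x) - 1 := by
        rw [Real.log_div (by positivity) (Real.exp_ne_zero 1), Real.log_exp]
      have hlog : Real.log (Q x / P x) ≤ (Q x / P x) / Real.exp 1 := by linarith
      have := mul_le_mul_of_nonneg_left hlog hPx.le
      calc P x * Real.log (Q x / P x) ≤ P x * ((Q x / P x) / Real.exp 1) := this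
        _ = Q x / Real.exp 1 := by field_simp
    rcases le_or_gt 0 (Real.log (P x / Q x)) with h | h
    · rw [abs_of_nonneg h]
      have : 0 ≤ Q x / Real.exp 1 := by positivity
      nlinarith
    · rw [abs_of_neg h]
      nlinarith [h3, hneg]
  calc ∑ x ∈ Finset.univ.filter (fun x => 0 < P x), P x * |Real.log (P x / Q x)|
      ≤ ∑ x ∈ Finset.univ.filter (fun x => 0 < P x),
          (P x * Real.log (P x / Q x) + 2 * (Q x / Real.exp 1)) :=
        Finset.sum_le_sum key
    _ = (∑ x ∈ Finset.univ.filter (fun x => 0 < P x), P x * Real.log (P x / Q x))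
        + (2 / Real.exp 1) * ∑ x ∈ Finset.univ.filter (fun x => 0 < P x), Q x := by
        rw [Finset.sum_add_distrib, Finset.mul_sum]
        congr 1
        apply Finset.sum_congr rfl
        intro x _; ring
    _ ≤ (∑ x ∈ Finset.univ.filter (fun x => 0 < P x), P x * Real.log (P x / Q x))
        + (2 / Real.exp 1) * 1 := by
        gcongr
        rw [← hQ_sum]
        exact Finset.sum_le_sum_of_subset_of_nonneg (Finset.filter_subset _ _)
            (fun i _ _ => hQ_nonneg i)
    _ = _ := by ring
end

section
/- Scaling limit of radial pair integrals: let K ⊆ ℝ^d be compact with Lebesgue-null topological boundary, and let g : [0,∞) → [0,∞) be measurable with ∫_{ℝ^d} g(‖v‖) dv < ∞. Then lim_{s → 0⁺} (1/s^d) ∬_{K×K} g(‖x−y‖/s) dx dy = λ(K) · ∫_{ℝ^d} g(‖v‖) dv, where λ denotes Lebesgue measure. -/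
open MeasureTheory Filter

/-- **Scaling limit of radial pair integrals.** For compact `K ⊆ ℝ^d` with Lebesgue-null
boundary and `g : [0,∞) → [0,∞)` with `∫_{ℝ^d} g(‖v‖) dv < ∞`,
`lim_{s→0⁺} (1/s^d) ∬_{K×K} g(‖x−y‖/s) dx dy = λ(K) · ∫_{ℝ^d} g(‖v‖) dv`. -/
theorem radial_pair_integral_scaling_limit
    (d : ℕ)
    (K : Set (EuclideanSpace ℝ (Fin d)))
    (hK_compact : IsCompact K) (hK_bd : volume (frontier K) = 0)
    (g : ℝ → ℝ) (hg_meas : Measurable g)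
    (hg_nonneg : ∀ r : ℝ, 0 ≤ r → 0 ≤ g r)
    (hg_int : Integrable (fun v : EuclideanSpace ℝ (Fin d) => g ‖v‖)) :
    Tendsto
      (fun s : ℝ => (1 / s ^ d) * ∫ x in K, ∫ y in K, g (dist x y / s))
      (nhdsWithin 0 (Set.Ioi 0))
      (nhds ((volume K).toReal * ∫ v : EuclideanSpace ℝ (Fin d), g ‖v‖)) := by
  classical
  have hKm : MeasurableSet K := hK_compact.isClosed.measurableSet
  set μ : Measure (EuclideanSpace ℝ (Fin d)) := volume.restrict K with hμ
  haveI : IsFiniteMeasure μ := by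
    constructor
    rw [hμ, Measure.restrict_apply_univ]
    exact hK_compact.measure_lt_top
  set indK : (EuclideanSpace ℝ (Fin d)) → ℝ := K.indicator 1 with hindK
  have hindK_meas : Measurable indK := measurable_one.indicator hKm
  have hindK_nonneg : ∀ z, 0 ≤ indK z := fun z => by
    by_cases h : z ∈ K <;> simp [hindK, Set.indicator, h]
  have hindK_le : ∀ z, indK z ≤ 1 := fun z => by
    by_cases h : z ∈ K <;> simp [hindK, Set.indicator, h]
  set F : ℝ → (EuclideanSpace ℝ (Fin d)) × (EuclideanSpace ℝ (Fin d)) → ℝ := fun s p => indK (p.1 - s • p.2) * g ‖p.2‖ with hF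
  -- measurability
  have hF_meas : ∀ s, Measurable (F s) := by
    intro s
    exact (hindK_meas.comp (measurable_fst.sub (measurable_snd.const_smul s))).mul
      (hg_meas.comp measurable_snd.norm)
  -- bound
  have hF_bd : ∀ s p, ‖F s p‖ ≤ g ‖p.2‖ := by
    intro s p
    have h1 : 0 ≤ g ‖p.2‖ := hg_nonneg _ (norm_nonneg _)
    have h2 : 0 ≤ F s p := mul_nonneg (hindK_nonneg _) h1
    rw [Real.norm_eq_abs, abs_of_nonneg h2]
    calc F s p = indK (p.1 - s • p.2) * g ‖p.2‖ := rfl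
      _ ≤ 1 * g ‖p.2‖ := mul_le_mul_of_nonneg_right (hindK_le _) h1
      _ = g ‖p.2‖ := one_mul _
  -- bound integrable on product
  have hbound_int : Integrable (fun p : (EuclideanSpace ℝ (Fin d)) × (EuclideanSpace ℝ (Fin d)) => g ‖p.2‖) (μ.prod volume) := by
    have := (integrable_const (1 : ℝ) (μ := μ)).mul_prod hg_int
    simpa using this
  have hF_int : ∀ s, Integrable (F s) (μ.prod volume) := fun s =>
    hbound_int.mono (hF_meas s).aestronglyMeasurable <| Filter.Eventually.of_forall fun p => by
      simpa [Real.norm_eq_abs, abs_of_nonneg (hg_nonneg _ (norm_nonneg _))] using hF_bd s p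
  -- value of limit integral
  have hlim_eq : (∫ p : (EuclideanSpace ℝ (Fin d)) × (EuclideanSpace ℝ (Fin d)), g ‖p.2‖ ∂(μ.prod volume))
      = (volume K).toReal * ∫ v : (EuclideanSpace ℝ (Fin d)), g ‖v‖ := by
    rw [integral_fun_snd (μ := μ) (ν := volume) (fun v : (EuclideanSpace ℝ (Fin d)) => g ‖v‖)]
    rw [hμ, measureReal_def, Measure.restrict_apply_univ]
    simp [smul_eq_mul]
  -- key identity for s > 0
  have hkey : ∀ s : ℝ, 0 < s →
      (1 / s ^ d) * (∫ x in K, ∫ y in K, g (dist x y / s))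
        = ∫ p, F s p ∂(μ.prod volume) := by
    intro s hs
    have hsd : (0:ℝ) < s ^ d := pow_pos hs d
    have inner_eq : ∀ x : (EuclideanSpace ℝ (Fin d)), (∫ y in K, g (dist x y / s) ∂volume)
        = s ^ d * ∫ v : (EuclideanSpace ℝ (Fin d)), indK (x - s • v) * g ‖v‖ ∂volume := by
      intro x
      have e1 : (∫ y in K, g (dist x y / s) ∂volume)
          = ∫ y : (EuclideanSpace ℝ (Fin d)), indK y * g (‖x - y‖ / s) ∂volume := by
        rw [← integral_indicator hKm]
        congr 1
        ext y
        by_cases h : y ∈ K <;> simp [hindK, Set.indicator, h, dist_eq_norm]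
      have e2 : (∫ y : (EuclideanSpace ℝ (Fin d)), indK y * g (‖x - y‖ / s) ∂volume)
          = ∫ z : (EuclideanSpace ℝ (Fin d)), indK (x - z) * g (‖z‖ / s) ∂volume := by
        rw [← integral_sub_left_eq_self (fun y : (EuclideanSpace ℝ (Fin d)) => indK y * g (‖x - y‖ / s)) volume x]
        congr 1
        ext z
        congr 2
        rw [sub_sub_cancel]
      have e3 : (∫ z : (EuclideanSpace ℝ (Fin d)), indK (x - z) * g (‖z‖ / s) ∂volume)
          = s ^ d * ∫ v : (EuclideanSpace ℝ (Fin d)), indK (x - s • v) * g ‖v‖ ∂volume := by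
        have h := MeasureTheory.Measure.integral_comp_smul (volume : Measure (EuclideanSpace ℝ (Fin d)))
          (fun z : (EuclideanSpace ℝ (Fin d)) => indK (x - z) * g (‖z‖ / s)) s
        rw [finrank_euclideanSpace_fin, abs_of_pos (inv_pos.2 hsd), smul_eq_mul] at h
        have h2 : (∫ v : (EuclideanSpace ℝ (Fin d)), (fun z : (EuclideanSpace ℝ (Fin d)) => indK (x - z) * g (‖z‖ / s)) (s • v) ∂volume)
            = ∫ v : (EuclideanSpace ℝ (Fin d)), indK (x - s • v) * g ‖v‖ ∂volume := by
          congr 1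
          ext v
          simp only
          congr 2
          rw [norm_smul, Real.norm_eq_abs, abs_of_pos hs]
          field_simp
        rw [h2] at h
        rw [h, ← mul_assoc, mul_inv_cancel₀ hsd.ne', one_mul]
      rw [e1, e2, e3]
    calc (1 / s ^ d) * (∫ x in K, ∫ y in K, g (dist x y / s))
        = (1 / s ^ d) * ∫ x in K, s ^ d * ∫ v : (EuclideanSpace ℝ (Fin d)), indK (x - s • v) * g ‖v‖ ∂volume := by
          congr 1
          exact setIntegral_congr_fun hKm fun x _ => inner_eq x
      _ = (1 / s ^ d) * (s ^ d * ∫ x in K, ∫ v : (EuclideanSpace ℝ (Fin d)), indK (x - s • v) * g ‖v‖ ∂volume) := by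
          rw [integral_const_mul]
      _ = ∫ x in K, ∫ v : (EuclideanSpace ℝ (Fin d)), indK (x - s • v) * g ‖v‖ ∂volume := by
          field_simp
      _ = ∫ p, F s p ∂(μ.prod volume) := by
          exact integral_integral (f := fun (x : (EuclideanSpace ℝ (Fin d))) (v : (EuclideanSpace ℝ (Fin d))) => indK (x - s • v) * g ‖v‖)
            (hF_int s)
  -- a.e. interior membership
  have hμfr : μ (interior K)ᶜ = 0 := by
    rw [hμ, Measure.restrict_apply measurableSet_interior.compl]
    refine measure_mono_null ?_ hK_bd
    intro z hz
    rw [hK_compact.isClosed.frontier_eq]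
    exact ⟨hz.2, hz.1⟩
  -- now the limit, via sequences
  rw [tendsto_iff_seq_tendsto]
  intro u hu
  have hu0 : Tendsto u atTop (nhds (0:ℝ)) := hu.mono_right nhdsWithin_le_nhds
  have hupos : ∀ᶠ n in atTop, u n ∈ Set.Ioi (0:ℝ) := hu self_mem_nhdsWithin
  have hae_prod : ∀ᵐ p ∂(μ.prod (volume : Measure (EuclideanSpace ℝ (Fin d)))), p.1 ∈ interior K := by
    rw [ae_iff]
    have hset : {p : (EuclideanSpace ℝ (Fin d)) × (EuclideanSpace ℝ (Fin d)) | ¬ p.1 ∈ interior K} = ((interior K)ᶜ) ×ˢ Set.univ := by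
      ext p; simp [Set.mem_prod]
    rw [hset, Measure.prod_prod, hμfr, zero_mul]
  have hconv : ∀ᵐ p ∂(μ.prod (volume : Measure (EuclideanSpace ℝ (Fin d)))),
      Tendsto (fun n => F (u n) p) atTop (nhds (g ‖p.2‖)) := by
    filter_upwards [hae_prod] with p hp
    have h1 : Tendsto (fun n => p.1 - u n • p.2) atTop (nhds p.1) := by
      have h2 : Tendsto (fun n => u n • p.2) atTop (nhds ((0:ℝ) • p.2)) :=
        hu0.smul_const p.2
      rw [zero_smul] at h2
      simpa using tendsto_const_nhds.sub h2
    have h2 : ∀ᶠ n in atTop, p.1 - u n • p.2 ∈ interior K :=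
      h1.eventually (isOpen_interior.mem_nhds hp)
    refine Tendsto.congr' ?_ (tendsto_const_nhds (x := g ‖p.2‖))
    filter_upwards [h2] with n hn
    have hone : indK (p.1 - u n • p.2) = 1 := by
      simp [hindK, Set.indicator, interior_subset hn]
    show g ‖p.2‖ = F (u n) p
    rw [show F (u n) p = indK (p.1 - u n • p.2) * g ‖p.2‖ from rfl, hone, one_mul]
  have hDCT : Tendsto (fun n => ∫ p, F (u n) p ∂(μ.prod volume)) atTop
      (nhds (∫ p : (EuclideanSpace ℝ (Fin d)) × (EuclideanSpace ℝ (Fin d)), g ‖p.2‖ ∂(μ.prod volume))) :=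
    tendsto_integral_of_dominated_convergence (fun p => g ‖p.2‖)
      (fun n => (hF_meas _).aestronglyMeasurable) hbound_int
      (fun n => Filter.Eventually.of_forall (hF_bd _)) hconv
  rw [hlim_eq] at hDCT
  refine hDCT.congr' ?_
  filter_upwards [hupos] with n hn
  exact (hkey (u n) hn).symm
end
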